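/- Direct sum decomposition over blocks: let Q be a finite poset, G a group, P : Q → Subgroup G monotone, and Ω ⊆ Q a subset with P constant on Ω that is a disjoint union of blocks C₁, …, C_r. With K = |Q| the order complex and K_Ω = |{V : ∃U ∈ Ω, U ≤ V}|, K_{>Ω} = |{V : ∃U ∈ Ω, U ≤ V and P_U < P_V}| (and similarly for each C_i), the relative simplicial cohomology satisfies H^n(K_Ω, K_{>Ω}; ℤ) ≅ ⊕_{i=1}^{r} H^n(K_{C_i}, K_{>C_i}; ℤ) for all n ≥ 0. -/

import Mathlib

/-- A relative simplex of the pair of full subcomplexes `(K_A, K_B)` of the order complex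
of `Q` spanned by vertex sets `B ⊆ A`: a chain in `A` with at least one vertex outside `B`,
with `n + 1` vertices. -/
def RelSimp {Q : Type*} [PartialOrder Q] (A B : Set Q) (n : ℤ) : Type _ :=
  {l : List Q // l.Chain' (· < ·) ∧ (∀ x ∈ l, x ∈ A) ∧ (∃ x ∈ l, x ∉ B) ∧
    (l.length : ℤ) = n + 1}

/-- Relative simplicial `n`-cochains of the pair `(K_A, K_B)`. -/
abbrev RelCochain {Q : Type*} [PartialOrder Q] (A B : Set Q) (n : ℤ) : Type _ :=
  RelSimp A B n → ℤ

open Classical in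
/-- The relative simplicial coboundary map (faces lying entirely in `K_B` contribute 0). -/
noncomputable def relDelta {Q : Type*} [PartialOrder Q] (A B : Set Q) (n : ℤ) :
    RelCochain A B n →+ RelCochain A B (n + 1) :=
  AddMonoidHom.mk'
    (fun f l => ∑ i ∈ Finset.range l.1.length, (-1 : ℤ) ^ i *
      (if h : (l.1.eraseIdx i).Chain' (· < ·) ∧ (∀ x ∈ l.1.eraseIdx i, x ∈ A) ∧
          (∃ x ∈ l.1.eraseIdx i, x ∉ B) ∧ ((l.1.eraseIdx i).length : ℤ) = n + 1
        then f ⟨l.1.eraseIdx i, h⟩ else 0))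
    (by
      intro f g
      funext l
      show (∑ i ∈ _, _ : ℤ) = (∑ i ∈ _, _ : ℤ) + (∑ i ∈ _, _ : ℤ)
      rw [← Finset.sum_add_distrib]
      refine Finset.sum_congr rfl fun i _ => ?_
      split
      · exact mul_add _ _ _
      · simp)

/-- The relative simplicial cohomology `H^n(K_A, K_B; ℤ)` of the pair of full subcomplexes
of the order complex of `Q` spanned by the vertex sets `B ⊆ A`. -/
noncomputable def relCoh {Q : Type*} [PartialOrder Q] (A B : Set Q) (n : ℤ) : Type _ :=
  (AddMonoidHom.ker (relDelta A B (n - 1 + 1))) ⧸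
    ((AddMonoidHom.range (relDelta A B (n - 1))).addSubgroupOf
      (AddMonoidHom.ker (relDelta A B (n - 1 + 1))))

noncomputable instance {Q : Type*} [PartialOrder Q] (A B : Set Q) (n : ℤ) :
    AddCommGroup (relCoh A B n) := by
  unfold relCoh; infer_instance


set_option linter.unusedSectionVars false

section AlgAux

variable {B C B' C' : Type*} [AddCommGroup B] [AddCommGroup C]
  [AddCommGroup B'] [AddCommGroup C']

/-- Restrict an `AddEquiv` to kernels of commuting maps. -/
noncomputable def kerCongr (d₁ : B →+ C) (d₁' : B' →+ C') (β : B ≃+ B') (γ : C ≃+ C')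
    (h₁ : ∀ b, γ (d₁ b) = d₁' (β b)) : d₁.ker ≃+ d₁'.ker where
  toFun b := ⟨β b.1, by
    rw [AddMonoidHom.mem_ker, ← h₁, AddMonoidHom.mem_ker.mp b.2, map_zero]⟩
  invFun b := ⟨β.symm b.1, by
    rw [AddMonoidHom.mem_ker]
    refine γ.injective ?_
    rw [h₁, β.apply_symm_apply, AddMonoidHom.mem_ker.mp b.2, map_zero]⟩
  left_inv b := by ext; simp
  right_inv b := by ext; simp
  map_add' a b := by ext; simp

@[simp] lemma kerCongr_apply_coe (d₁ : B →+ C) (d₁' : B' →+ C') (β : B ≃+ B') (γ : C ≃+ C')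
    (h₁ : ∀ b, γ (d₁ b) = d₁' (β b)) (b : d₁.ker) :
    ((kerCongr d₁ d₁' β γ h₁ b : d₁'.ker) : B') = β b.1 := rfl

/-- A commuting ladder of `AddEquiv`s induces an equivalence of "cohomologies". -/
noncomputable def cohCongr {A A' : Type*} [AddCommGroup A] [AddCommGroup A']
    (d₀ : A →+ B) (d₁ : B →+ C) (d₀' : A' →+ B') (d₁' : B' →+ C')
    (α : A ≃+ A') (β : B ≃+ B') (γ : C ≃+ C')
    (h₀ : ∀ a, β (d₀ a) = d₀' (α a)) (h₁ : ∀ b, γ (d₁ b) = d₁' (β b)) :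
    (d₁.ker ⧸ d₀.range.addSubgroupOf d₁.ker) ≃+
      (d₁'.ker ⧸ d₀'.range.addSubgroupOf d₁'.ker) :=
  QuotientAddGroup.congr _ _ (kerCongr d₁ d₁' β γ h₁) (by
    ext b
    simp only [AddSubgroup.mem_map, AddSubgroup.mem_addSubgroupOf, AddMonoidHom.mem_range]
    constructor
    · rintro ⟨x, ⟨a, ha⟩, rfl⟩
      exact ⟨α a, by simp only [AddMonoidHom.coe_coe, kerCongr_apply_coe, ← h₀, ha]⟩
    · rintro ⟨a, ha⟩
      refine ⟨(kerCongr d₁ d₁' β γ h₁).symm b, ⟨α.symm a, ?_⟩, by simp⟩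
      have : ((kerCongr d₁ d₁' β γ h₁).symm b : B) = β.symm b.1 := rfl
      rw [this]
      refine β.injective ?_
      rw [h₀, α.apply_symm_apply, ha, β.apply_symm_apply])

/-- Product of a family of `AddMonoidHom`s. -/
def piHom {ι : Type*} {M N : ι → Type*} [∀ i, AddCommGroup (M i)] [∀ i, AddCommGroup (N i)]
    (d : ∀ i, M i →+ N i) : (∀ i, M i) →+ (∀ i, N i) :=
  AddMonoidHom.mk' (fun f i => d i (f i)) (by intro f g; funext i; simp)

@[simp] lemma piHom_apply {ι : Type*} {M N : ι → Type*} [∀ i, AddCommGroup (M i)]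
    [∀ i, AddCommGroup (N i)] (d : ∀ i, M i →+ N i) (f : ∀ i, M i) (i : ι) :
    piHom d f i = d i (f i) := rfl

/-- Cohomology of a product complex is the product of cohomologies. -/
noncomputable def piQuotEquiv {ι : Type*} {A B C : ι → Type*}
    [∀ i, AddCommGroup (A i)] [∀ i, AddCommGroup (B i)] [∀ i, AddCommGroup (C i)]
    (d₀ : ∀ i, A i →+ B i) (d₁ : ∀ i, B i →+ C i) :
    ((piHom d₁).ker ⧸ (piHom d₀).range.addSubgroupOf (piHom d₁).ker) ≃+
      ∀ i, ((d₁ i).ker ⧸ (d₀ i).range.addSubgroupOf (d₁ i).ker) := by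
  have hmem : ∀ (f : (piHom d₁).ker) (i : ι), f.1 i ∈ (d₁ i).ker := by
    intro f i
    exact AddMonoidHom.mem_ker.mpr (congrFun (AddMonoidHom.mem_ker.mp f.2) i)
  let φ : (piHom d₁).ker →+ ∀ i, ((d₁ i).ker ⧸ (d₀ i).range.addSubgroupOf (d₁ i).ker) :=
    AddMonoidHom.mk' (fun f i => QuotientAddGroup.mk' _ ⟨f.1 i, hmem f i⟩)
      (by
        intro f g; funext i
        show QuotientAddGroup.mk' ((d₀ i).range.addSubgroupOf (d₁ i).ker) ⟨(f + g).1 i, hmem (f + g) i⟩ =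
          QuotientAddGroup.mk' ((d₀ i).range.addSubgroupOf (d₁ i).ker) ⟨f.1 i, hmem f i⟩ +
            QuotientAddGroup.mk' ((d₀ i).range.addSubgroupOf (d₁ i).ker) ⟨g.1 i, hmem g i⟩
        rw [← map_add]
        exact congrArg _ (Subtype.ext rfl))
  have hsurj : Function.Surjective φ := by
    intro g
    choose c hc using fun i => QuotientAddGroup.mk'_surjective _ (g i)
    refine ⟨⟨fun i => (c i).1, AddMonoidHom.mem_ker.mpr
      (funext fun i => AddMonoidHom.mem_ker.mp (c i).2)⟩, ?_⟩
    funext i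
    exact hc i
  have hker : φ.ker = (piHom d₀).range.addSubgroupOf (piHom d₁).ker := by
    ext f
    simp only [AddMonoidHom.mem_ker, AddSubgroup.mem_addSubgroupOf, AddMonoidHom.mem_range]
    constructor
    · intro h
      have h' : ∀ i, ∃ a, d₀ i a = f.1 i := by
        intro i
        have hi := congrFun h i
        have : (⟨f.1 i, hmem f i⟩ : (d₁ i).ker) ∈
            (d₀ i).range.addSubgroupOf (d₁ i).ker := by
          rw [← QuotientAddGroup.eq_zero_iff]
          exact hi
        rw [AddSubgroup.mem_addSubgroupOf] at this
        exact AddMonoidHom.mem_range.mp this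
      choose a ha using h'
      exact ⟨a, funext ha⟩
    · rintro ⟨a, ha⟩
      funext i
      show QuotientAddGroup.mk' ((d₀ i).range.addSubgroupOf (d₁ i).ker) ⟨f.1 i, hmem f i⟩ = 0
      rw [QuotientAddGroup.mk'_apply, QuotientAddGroup.eq_zero_iff,
        AddSubgroup.mem_addSubgroupOf, AddMonoidHom.mem_range]
      exact ⟨a i, congrFun ha i⟩
  exact (QuotientAddGroup.quotientAddEquivOfEq hker.symm).trans
    (QuotientAddGroup.quotientKerEquivOfSurjective φ hsurj)

end AlgAux

/-- `DirectSum` over a `Fintype` is the product. -/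
noncomputable def dsEquivPi {ι : Type*} [Fintype ι] [DecidableEq ι] (β : ι → Type*)
    [∀ i, AddCommGroup (β i)] : DirectSum ι β ≃+ ∀ i, β i :=
  { DFinsupp.equivFunOnFintype with
    map_add' := fun f g => funext fun i => DFinsupp.add_apply f g i }

section Comb

variable {Q : Type*} [PartialOrder Q] {G : Type*} [Group G]
variable (P : Q → Subgroup G) {Ω : Set Q} {r : ℕ} {Cs : Fin r → Set Q}

private lemma block_subset (hcover : Ω = ⋃ i, Cs i) (i : Fin r) : Cs i ⊆ Ω := by
  rw [hcover]; exact Set.subset_iUnion Cs i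

private lemma mem_block_of_rel
    (hblocks : ∀ i, ∃ J₀ : Q,
      Cs i = {J | Relation.EqvGen (fun a b => a ≤ b ∧ P a = P b) J₀ J})
    (i : Fin r) {x y : Q} (hx : x ∈ Cs i) (h : x ≤ y ∧ P x = P y) : y ∈ Cs i := by
  obtain ⟨J₀, hJ⟩ := hblocks i
  rw [hJ] at hx ⊢
  exact hx.trans _ _ _ (Relation.EqvGen.rel (r := fun a b => a ≤ b ∧ P a = P b) x y h)

private lemma mem_block_of_rel'
    (hblocks : ∀ i, ∃ J₀ : Q,
      Cs i = {J | Relation.EqvGen (fun a b => a ≤ b ∧ P a = P b) J₀ J})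
    (i : Fin r) {x y : Q} (hx : x ∈ Cs i) (h : y ≤ x ∧ P y = P x) : y ∈ Cs i := by
  obtain ⟨J₀, hJ⟩ := hblocks i
  rw [hJ] at hx ⊢
  exact hx.trans _ _ _ ((Relation.EqvGen.rel (r := fun a b => a ≤ b ∧ P a = P b) y x h).symm _ _)

private lemma mem_of_A_notB (hmono : Monotone P)
    (hblocks : ∀ i, ∃ J₀ : Q,
      Cs i = {J | Relation.EqvGen (fun a b => a ≤ b ∧ P a = P b) J₀ J})
    (i : Fin r) {x : Q} (hxA : x ∈ {V | ∃ U ∈ Cs i, U ≤ V})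
    (hxB : x ∉ {V | ∃ U ∈ Cs i, U ≤ V ∧ P U < P V}) : x ∈ Cs i := by
  obtain ⟨U, hU, hUx⟩ := hxA
  have heq : P U = P x := by
    by_contra hne
    exact hxB ⟨U, hU, hUx, lt_of_le_of_ne (hmono hUx) hne⟩
  exact mem_block_of_rel P hblocks i hU ⟨hUx, heq⟩

private lemma notB_iff (hmono : Monotone P)
    (hconst : ∀ U ∈ Ω, ∀ U' ∈ Ω, P U = P U')
    (hblocks : ∀ i, ∃ J₀ : Q,
      Cs i = {J | Relation.EqvGen (fun a b => a ≤ b ∧ P a = P b) J₀ J})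
    (hcover : Ω = ⋃ i, Cs i) (i : Fin r) {x : Q}
    (hxA : x ∈ {V | ∃ U ∈ Cs i, U ≤ V}) :
    x ∉ {V | ∃ U ∈ Ω, U ≤ V ∧ P U < P V} ↔ x ∉ {V | ∃ U ∈ Cs i, U ≤ V ∧ P U < P V} := by
  constructor
  · intro h hb
    obtain ⟨U, hU, hUx, hlt⟩ := hb
    exact h ⟨U, block_subset hcover i hU, hUx, hlt⟩
  · intro h hb
    have hxC : x ∈ Cs i := mem_of_A_notB P hmono hblocks i hxA h
    obtain ⟨U', hU', hU'x, hlt⟩ := hb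
    have : P U' = P x := hconst U' hU' x (block_subset hcover i hxC)
    rw [this] at hlt
    exact lt_irrefl _ hlt

private lemma exists_block (hmono : Monotone P)
    (hblocks : ∀ i, ∃ J₀ : Q,
      Cs i = {J | Relation.EqvGen (fun a b => a ≤ b ∧ P a = P b) J₀ J})
    (hcover : Ω = ⋃ i, Cs i) {x : Q}
    (hxA : x ∈ {V | ∃ U ∈ Ω, U ≤ V}) (hxB : x ∉ {V | ∃ U ∈ Ω, U ≤ V ∧ P U < P V}) :
    ∃ i, x ∈ Cs i := by
  obtain ⟨U, hU, hUx⟩ := hxA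
  have heq : P U = P x := by
    by_contra hne
    exact hxB ⟨U, hU, hUx, lt_of_le_of_ne (hmono hUx) hne⟩
  have : U ∈ ⋃ i, Cs i := hcover ▸ hU
  obtain ⟨i, hi⟩ := Set.mem_iUnion.mp this
  exact ⟨i, mem_block_of_rel P hblocks i hi ⟨hUx, heq⟩⟩

private lemma chain_in_block (hmono : Monotone P)
    (hconst : ∀ U ∈ Ω, ∀ U' ∈ Ω, P U = P U')
    (hblocks : ∀ i, ∃ J₀ : Q,
      Cs i = {J | Relation.EqvGen (fun a b => a ≤ b ∧ P a = P b) J₀ J})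
    (hcover : Ω = ⋃ i, Cs i) (i : Fin r) {l : List Q}
    (hchain : l.Chain' (· < ·)) (hA : ∀ y ∈ l, y ∈ {V | ∃ U ∈ Ω, U ≤ V})
    {x : Q} (hx : x ∈ l) (hxC : x ∈ Cs i) :
    ∀ y ∈ l, y ∈ {V | ∃ U ∈ Cs i, U ≤ V} := by
  intro y hy
  have hpw : l.Pairwise (fun a b => a < b ∨ b < a) :=
    (List.isChain_iff_pairwise.mp hchain).imp Or.inl
  rcases eq_or_ne y x with rfl | hne
  · exact ⟨y, hxC, le_refl y⟩
  · rcases (haveI : Std.Symm (fun a b : Q => a < b ∨ b < a) := ⟨fun a b h => h.symm⟩; hpw.forall hy hx hne) with h | h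
    · obtain ⟨U', hU', hU'y⟩ := hA y hy
      have h1 : P U' = P x := hconst U' hU' x (block_subset hcover i hxC)
      have h2 : P x ≤ P y := h1 ▸ hmono hU'y
      have hyx : P y = P x := le_antisymm (hmono h.le) h2
      exact ⟨y, mem_block_of_rel' P hblocks i hxC ⟨h.le, hyx⟩, le_refl y⟩
    · exact ⟨x, hxC, h.le⟩

private lemma block_unique (hmono : Monotone P)
    (hconst : ∀ U ∈ Ω, ∀ U' ∈ Ω, P U = P U')
    (hblocks : ∀ i, ∃ J₀ : Q,
      Cs i = {J | Relation.EqvGen (fun a b => a ≤ b ∧ P a = P b) J₀ J})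
    (hdisj : ∀ i j, i ≠ j → Disjoint (Cs i) (Cs j))
    (hcover : Ω = ⋃ i, Cs i) {i j : Fin r} {x : Q}
    (hAi : x ∈ {V | ∃ U ∈ Cs i, U ≤ V}) (hBi : x ∉ {V | ∃ U ∈ Cs i, U ≤ V ∧ P U < P V})
    (hAj : x ∈ {V | ∃ U ∈ Cs j, U ≤ V}) : i = j := by
  have hB0 : x ∉ {V | ∃ U ∈ Ω, U ≤ V ∧ P U < P V} :=
    (notB_iff P hmono hconst hblocks hcover i hAi).mpr hBi
  have hBj : x ∉ {V | ∃ U ∈ Cs j, U ≤ V ∧ P U < P V} :=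
    (notB_iff P hmono hconst hblocks hcover j hAj).mp hB0
  have hi : x ∈ Cs i := mem_of_A_notB P hmono hblocks i hAi hBi
  have hj : x ∈ Cs j := mem_of_A_notB P hmono hblocks j hAj hBj
  by_contra hne
  exact Set.disjoint_left.mp (hdisj i j hne) hi hj

end Comb
section Main

variable {Q : Type*} [PartialOrder Q] {G : Type*} [Group G]
variable (P : Q → Subgroup G) (Ω : Set Q) {r : ℕ} (Cs : Fin r → Set Q)
variable (hmono : Monotone P)
  (hconst : ∀ U ∈ Ω, ∀ U' ∈ Ω, P U = P U')
  (hblocks : ∀ i, ∃ J₀ : Q,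
    Cs i = {J | Relation.EqvGen (fun a b => a ≤ b ∧ P a = P b) J₀ J})
  (hdisj : ∀ i j, i ≠ j → Disjoint (Cs i) (Cs j))
  (hcover : Ω = ⋃ i, Cs i)

include hmono hconst hblocks hdisj hcover

private lemma incl_proof (i : Fin r) {n : ℤ}
    (m : RelSimp {V | ∃ U ∈ Cs i, U ≤ V} {V | ∃ U ∈ Cs i, U ≤ V ∧ P U < P V} n) :
    m.1.Chain' (· < ·) ∧ (∀ x ∈ m.1, x ∈ {V | ∃ U ∈ Ω, U ≤ V}) ∧
      (∃ x ∈ m.1, x ∉ {V | ∃ U ∈ Ω, U ≤ V ∧ P U < P V}) ∧ (m.1.length : ℤ) = n + 1 := by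
  obtain ⟨hch, hA, ⟨x, hx, hxB⟩, hlen⟩ := m.2
  refine ⟨hch, fun y hy => ?_, ⟨x, hx, ?_⟩, hlen⟩
  · obtain ⟨U, hU, hUy⟩ := hA y hy
    exact ⟨U, block_subset hcover i hU, hUy⟩
  · exact (notB_iff P hmono hconst hblocks hcover i (hA x hx)).mpr hxB

private lemma exists_block_simplex {n : ℤ}
    (l : RelSimp {V | ∃ U ∈ Ω, U ≤ V} {V | ∃ U ∈ Ω, U ≤ V ∧ P U < P V} n) :
    ∃ i : Fin r, (∀ y ∈ l.1, y ∈ {V | ∃ U ∈ Cs i, U ≤ V}) ∧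
      (∃ x ∈ l.1, x ∉ {V | ∃ U ∈ Cs i, U ≤ V ∧ P U < P V}) := by
  obtain ⟨hch, hA, ⟨x, hx, hxB⟩, hlen⟩ := l.2
  obtain ⟨i, hi⟩ := exists_block P hmono hblocks hcover (hA x hx) hxB
  have hAi := chain_in_block P hmono hconst hblocks hcover i hch hA hx hi
  exact ⟨i, hAi, x, hx, (notB_iff P hmono hconst hblocks hcover i (hAi x hx)).mp hxB⟩

private lemma g_congr {n : ℤ}
    (g : ∀ i, RelCochain {V | ∃ U ∈ Cs i, U ≤ V} {V | ∃ U ∈ Cs i, U ≤ V ∧ P U < P V} n)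
    {i j : Fin r} (hij : i = j) (s : List Q)
    (h : s.Chain' (· < ·) ∧ (∀ x ∈ s, x ∈ {V | ∃ U ∈ Cs i, U ≤ V}) ∧
      (∃ x ∈ s, x ∉ {V | ∃ U ∈ Cs i, U ≤ V ∧ P U < P V}) ∧ (s.length : ℤ) = n + 1)
    (h' : s.Chain' (· < ·) ∧ (∀ x ∈ s, x ∈ {V | ∃ U ∈ Cs j, U ≤ V}) ∧
      (∃ x ∈ s, x ∉ {V | ∃ U ∈ Cs j, U ≤ V ∧ P U < P V}) ∧ (s.length : ℤ) = n + 1) :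
    g i ⟨s, h⟩ = g j ⟨s, h'⟩ := by
  subst hij; rfl

/-- The cochain-level decomposition. -/
private noncomputable def Phi (n : ℤ) :
    RelCochain {V | ∃ U ∈ Ω, U ≤ V} {V | ∃ U ∈ Ω, U ≤ V ∧ P U < P V} n ≃+
      ∀ i, RelCochain {V | ∃ U ∈ Cs i, U ≤ V} {V | ∃ U ∈ Cs i, U ≤ V ∧ P U < P V} n where
  toFun f i m := f ⟨m.1, incl_proof P Ω Cs hmono hconst hblocks hdisj hcover i m⟩
  invFun g l :=
    g (Classical.choose (exists_block_simplex P Ω Cs hmono hconst hblocks hdisj hcover l))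
      ⟨l.1, l.2.1,
        (Classical.choose_spec (exists_block_simplex P Ω Cs hmono hconst hblocks hdisj hcover l)).1,
        (Classical.choose_spec (exists_block_simplex P Ω Cs hmono hconst hblocks hdisj hcover l)).2,
        l.2.2.2.2⟩
  left_inv f := by
    funext l
    exact congrArg f (Subtype.ext rfl)
  right_inv g := by
    funext i m
    set l : RelSimp {V | ∃ U ∈ Ω, U ≤ V} {V | ∃ U ∈ Ω, U ≤ V ∧ P U < P V} n :=
      ⟨m.1, incl_proof P Ω Cs hmono hconst hblocks hdisj hcover i m⟩ with hl
    have hu := Classical.choose_spec (exists_block_simplex P Ω Cs hmono hconst hblocks hdisj hcover l)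
    obtain ⟨x, hx, hxB⟩ := hu.2
    have heq : Classical.choose (exists_block_simplex P Ω Cs hmono hconst hblocks hdisj hcover l) = i :=
      block_unique P hmono hconst hblocks hdisj hcover (hu.1 x hx) hxB
        (m.2.2.1 x hx)
    exact g_congr P Ω Cs hmono hconst hblocks hdisj hcover g heq m.1 _ m.2
  map_add' f g := by
    funext i m
    rfl

private lemma face_cond_iff (i : Fin r) {m s : List Q}
    (hm : ∀ y ∈ m, y ∈ {V | ∃ U ∈ Cs i, U ≤ V}) (hs : ∀ x ∈ s, x ∈ m) (k : ℤ) :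
    (s.Chain' (· < ·) ∧ (∀ x ∈ s, x ∈ {V | ∃ U ∈ Ω, U ≤ V}) ∧
      (∃ x ∈ s, x ∉ {V | ∃ U ∈ Ω, U ≤ V ∧ P U < P V}) ∧ (s.length : ℤ) = k) ↔
    (s.Chain' (· < ·) ∧ (∀ x ∈ s, x ∈ {V | ∃ U ∈ Cs i, U ≤ V}) ∧
      (∃ x ∈ s, x ∉ {V | ∃ U ∈ Cs i, U ≤ V ∧ P U < P V}) ∧ (s.length : ℤ) = k) := by
  have hA : ∀ x ∈ s, x ∈ {V | ∃ U ∈ Cs i, U ≤ V} := fun x hx => hm x (hs x hx)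
  constructor
  · rintro ⟨hch, -, ⟨x, hx, hxB⟩, hlen⟩
    exact ⟨hch, hA, ⟨x, hx,
      (notB_iff P hmono hconst hblocks hcover i (hA x hx)).mp hxB⟩, hlen⟩
  · rintro ⟨hch, -, ⟨x, hx, hxB⟩, hlen⟩
    refine ⟨hch, fun y hy => ?_, ⟨x, hx,
      (notB_iff P hmono hconst hblocks hcover i (hA x hx)).mpr hxB⟩, hlen⟩
    obtain ⟨U, hU, hUy⟩ := hA y hy
    exact ⟨U, block_subset hcover i hU, hUy⟩

private lemma Phi_comm (n : ℤ)
    (f : RelCochain {V | ∃ U ∈ Ω, U ≤ V} {V | ∃ U ∈ Ω, U ≤ V ∧ P U < P V} n) :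
    Phi P Ω Cs hmono hconst hblocks hdisj hcover (n + 1)
        (relDelta {V | ∃ U ∈ Ω, U ≤ V} {V | ∃ U ∈ Ω, U ≤ V ∧ P U < P V} n f) =
      piHom (fun i => relDelta {V | ∃ U ∈ Cs i, U ≤ V} {V | ∃ U ∈ Cs i, U ≤ V ∧ P U < P V} n)
        (Phi P Ω Cs hmono hconst hblocks hdisj hcover n f) := by
  classical
  funext i m
  have hsub : ∀ j : ℕ, ∀ x ∈ m.1.eraseIdx j, x ∈ m.1 :=
    fun j x hx => (List.eraseIdx_sublist m.1 j).subset hx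
  show (∑ j ∈ Finset.range m.1.length, (-1 : ℤ) ^ j *
      (if h : (m.1.eraseIdx j).Chain' (· < ·) ∧
          (∀ x ∈ m.1.eraseIdx j, x ∈ {V | ∃ U ∈ Ω, U ≤ V}) ∧
          (∃ x ∈ m.1.eraseIdx j, x ∉ {V | ∃ U ∈ Ω, U ≤ V ∧ P U < P V}) ∧
          ((m.1.eraseIdx j).length : ℤ) = n + 1
        then f ⟨m.1.eraseIdx j, h⟩ else 0)) =
    ∑ j ∈ Finset.range m.1.length, (-1 : ℤ) ^ j *
      (if h : (m.1.eraseIdx j).Chain' (· < ·) ∧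
          (∀ x ∈ m.1.eraseIdx j, x ∈ {V | ∃ U ∈ Cs i, U ≤ V}) ∧
          (∃ x ∈ m.1.eraseIdx j, x ∉ {V | ∃ U ∈ Cs i, U ≤ V ∧ P U < P V}) ∧
          ((m.1.eraseIdx j).length : ℤ) = n + 1
        then f ⟨m.1.eraseIdx j,
          incl_proof P Ω Cs hmono hconst hblocks hdisj hcover i ⟨m.1.eraseIdx j, h⟩⟩ else 0)
  refine Finset.sum_congr rfl fun j _ => ?_
  have hiff := face_cond_iff P Ω Cs hmono hconst hblocks hdisj hcover i m.2.2.1 (hsub j) (n + 1)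
  congr 1
  split_ifs with h1 h2 h2
  · rfl
  · exact absurd (hiff.mp h1) h2
  · exact absurd (hiff.mpr h2) h1
  · rfl

end Main

set_option linter.unusedSectionVars true

/-- Direct sum decomposition over blocks: if `Ω ⊆ Q` has constant local group and is the
disjoint union of blocks `C₁, …, C_r`, then the relative cohomology of `(K_Ω, K_{>Ω})`
decomposes as the direct sum of the relative cohomologies of the `(K_{C_i}, K_{>C_i})`. -/
theorem stmt_17 {Q : Type*} [PartialOrder Q] [Finite Q] {G : Type*} [Group G]
    (P : Q → Subgroup G) (hmono : Monotone P)
    (Ω : Set Q) (hconst : ∀ U ∈ Ω, ∀ U' ∈ Ω, P U = P U')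
    (r : ℕ) (Cs : Fin r → Set Q)
    (hblocks : ∀ i, ∃ J₀ : Q,
      Cs i = {J | Relation.EqvGen (fun a b => a ≤ b ∧ P a = P b) J₀ J})
    (hdisj : ∀ i j, i ≠ j → Disjoint (Cs i) (Cs j))
    (hcover : Ω = ⋃ i, Cs i)
    (n : ℤ) (hn : 0 ≤ n) :
    Nonempty (relCoh {V | ∃ U ∈ Ω, U ≤ V} {V | ∃ U ∈ Ω, U ≤ V ∧ P U < P V} n ≃+
      DirectSum (Fin r) (fun i =>
        relCoh {V | ∃ U ∈ Cs i, U ≤ V} {V | ∃ U ∈ Cs i, U ≤ V ∧ P U < P V} n)) := by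
  exact ⟨((cohCongr
      (relDelta {V | ∃ U ∈ Ω, U ≤ V} {V | ∃ U ∈ Ω, U ≤ V ∧ P U < P V} (n - 1))
      (relDelta {V | ∃ U ∈ Ω, U ≤ V} {V | ∃ U ∈ Ω, U ≤ V ∧ P U < P V} (n - 1 + 1))
      (piHom fun i =>
        relDelta {V | ∃ U ∈ Cs i, U ≤ V} {V | ∃ U ∈ Cs i, U ≤ V ∧ P U < P V} (n - 1))
      (piHom fun i =>
        relDelta {V | ∃ U ∈ Cs i, U ≤ V} {V | ∃ U ∈ Cs i, U ≤ V ∧ P U < P V} (n - 1 + 1))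
      (Phi P Ω Cs hmono hconst hblocks hdisj hcover (n - 1))
      (Phi P Ω Cs hmono hconst hblocks hdisj hcover (n - 1 + 1))
      (Phi P Ω Cs hmono hconst hblocks hdisj hcover (n - 1 + 1 + 1))
      (Phi_comm P Ω Cs hmono hconst hblocks hdisj hcover (n - 1))
      (Phi_comm P Ω Cs hmono hconst hblocks hdisj hcover (n - 1 + 1))).trans
    (piQuotEquiv _ _)).trans
    (dsEquivPi _).symm⟩
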